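/- Let L ∈ 𝐋 and V ∈ 𝐕(L). Then for all u, v ∈ [0,1] one has d_ABW(L+uV, L+vV) = |u−v|·‖V‖_F. In particular, d_ABW(L, L+uV) = u·‖V‖_F for every u ∈ [0,1], so u ↦ L+uV is a constant speed geodesic for the pseudometric d_ABW. -/

import Mathlib

open Matrix Filter Topology

/-- Square matrices of size `dT × dT`, indexed by blocks: index `(t, i)` is
row/column `i` within block `t`. -/
abbrev Mat (d T : ℕ) := Matrix (Fin T × Fin d) (Fin T × Fin d) ℝ

/-- The `t`-th diagonal `d × d` block of a `dT × dT` matrix. -/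
def blk {d T : ℕ} (A : Mat d T) (t : Fin T) : Matrix (Fin d) (Fin d) ℝ :=
  fun i j => A (t, i) (t, j)

/-- The `t`-th block column of a `dT × dT` matrix, a `dT × d` matrix. -/
def colBlk {d T : ℕ} (A : Mat d T) (t : Fin T) : Matrix (Fin T × Fin d) (Fin d) ℝ :=
  fun p j => A p (t, j)

/-- Membership in `𝐋`: block lower triangular matrices. -/
def memL {d T : ℕ} (A : Mat d T) : Prop :=
  ∀ (t s : Fin T) (i j : Fin d), t < s → A (t, i) (s, j) = 0

/-- Membership in `𝐎`: block diagonal matrices with orthogonal `d × d` diagonal blocks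
(equivalently: block diagonal and orthogonal). -/
def memO {d T : ℕ} (O : Mat d T) : Prop :=
  (∀ (t s : Fin T) (i j : Fin d), t ≠ s → O (t, i) (s, j) = 0) ∧ Oᵀ * O = 1

/-- The Frobenius norm of a real matrix. -/
noncomputable def frobNorm {m n : Type*} [Fintype m] [Fintype n] (A : Matrix m n ℝ) : ℝ :=
  Real.sqrt (∑ i, ∑ j, (A i j) ^ 2)

/-- The Frobenius inner product of two real matrices. -/
noncomputable def frobInner {m n : Type*} [Fintype m] [Fintype n] (A B : Matrix m n ℝ) : ℝ :=
  ∑ i, ∑ j, A i j * B i j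

/-- The adapted Bures–Wasserstein distance `d_ABW(L, M) = inf_{O ∈ 𝐎} ‖L - M O‖_F`. -/
noncomputable def dABW {d T : ℕ} (L M : Mat d T) : ℝ :=
  sInf {r : ℝ | ∃ O : Mat d T, memO O ∧ r = frobNorm (L - M * O)}

/-- The set `𝐎*(L, M)` of optimizers of `inf_{O ∈ 𝐎} ‖L - M O‖_F`. -/
noncomputable def OStar {d T : ℕ} (L M : Mat d T) : Set (Mat d T) :=
  {O | memO O ∧ frobNorm (L - M * O) = dABW L M}

/-- The set `𝐕(L) = {M P - L : M ∈ 𝐋, P ∈ 𝐎*(L, M)}`. -/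
noncomputable def VSet {d T : ℕ} (L : Mat d T) : Set (Mat d T) :=
  {V | ∃ M P : Mat d T, memL M ∧ P ∈ OStar L M ∧ V = M * P - L}

/-- The set `𝒱(L) = {V ∈ 𝐋 : (Vᵀ L)_{t,t} is symmetric for all t}`. -/
def calV {d T : ℕ} (L : Mat d T) : Set (Mat d T) :=
  {V | memL V ∧ ∀ t : Fin T, (blk (Vᵀ * L) t).IsSymm}

/-- The set `𝐋^reg = {L ∈ 𝐋 : (Lᵀ L)_{t,t} is positive definite for all t}`. -/
def LReg {d T : ℕ} : Set (Mat d T) :=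
  {L | memL L ∧ ∀ t : Fin T, (blk (Lᵀ * L) t).PosDef}

/-- The sum of the singular values of a real square matrix `A`,
i.e. the trace of the positive semidefinite square root of `Aᵀ A`. -/
noncomputable def svSum {n : ℕ} (A : Matrix (Fin n) (Fin n) ℝ) : ℝ :=
  ((Matrix.posSemidef_conjTranspose_mul_self A).1.eigenvectorUnitary *
    diagonal ((RCLike.ofReal : ℝ → ℝ) ∘ Real.sqrt ∘
      (Matrix.posSemidef_conjTranspose_mul_self A).1.eigenvalues) *
    (star (Matrix.posSemidef_conjTranspose_mul_self A).1.eigenvectorUnitary :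
      Matrix (Fin n) (Fin n) ℝ)).trace

/-- The operator norm of a real matrix: the supremum of the euclidean norm `‖A x‖₂`
over the euclidean unit ball. -/
noncomputable def opNorm {m n : Type*} [Fintype m] [Fintype n] (A : Matrix m n ℝ) : ℝ :=
  sSup {r : ℝ | ∃ x : n → ℝ, (∑ j, (x j) ^ 2) ≤ 1 ∧ r = Real.sqrt (∑ i, (A.mulVec x i) ^ 2)}


namespace Stmt9Aux

attribute [local instance] Matrix.frobeniusNormedAddCommGroup Matrix.frobeniusNormedSpace

lemma frobNorm_eq_norm {m n : Type*} [Fintype m] [Fintype n] (A : Matrix m n ℝ) :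
    frobNorm A = ‖A‖ := by
  rw [frobNorm, Matrix.frobenius_norm_def, Real.sqrt_eq_rpow]
  simp only [Real.rpow_two, Real.norm_eq_abs, sq_abs]

lemma frobNorm_nonneg {m n : Type*} [Fintype m] [Fintype n] (A : Matrix m n ℝ) :
    0 ≤ frobNorm A := Real.sqrt_nonneg _

lemma frobNorm_smul {m n : Type*} [Fintype m] [Fintype n] (c : ℝ) (A : Matrix m n ℝ) :
    frobNorm (c • A) = |c| * frobNorm A := by
  rw [frobNorm_eq_norm, frobNorm_eq_norm, norm_smul, Real.norm_eq_abs]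

lemma frobNorm_sub_rev {m n : Type*} [Fintype m] [Fintype n] (A B : Matrix m n ℝ) :
    frobNorm (A - B) = frobNorm (B - A) := by
  rw [frobNorm_eq_norm, frobNorm_eq_norm, norm_sub_rev]

lemma frobNorm_eq_sqrt_trace {m n : Type*} [Fintype m] [Fintype n] (A : Matrix m n ℝ) :
    frobNorm A = Real.sqrt ((Aᵀ * A).trace) := by
  have h : (Aᵀ * A).trace = ∑ j, ∑ i, A i j * A i j := by
    simp [Matrix.trace, Matrix.diag, Matrix.mul_apply]
  rw [frobNorm, h, Finset.sum_comm]
  simp_rw [sq]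

variable {d T : ℕ}

lemma memO_one : memO (1 : Mat d T) := by
  refine ⟨fun t s i j hts => Matrix.one_apply_ne fun h => hts (congrArg Prod.fst h), by simp⟩

lemma memO_mul {O₁ O₂ : Mat d T} (h₁ : memO O₁) (h₂ : memO O₂) : memO (O₁ * O₂) := by
  refine ⟨?_, ?_⟩
  · intro t s i j hts
    rw [Matrix.mul_apply]
    apply Finset.sum_eq_zero
    rintro ⟨r, k⟩ _
    rcases eq_or_ne r t with rfl | hr
    · rw [h₂.1 r s k j hts, mul_zero]
    · rw [h₁.1 t r i k (Ne.symm hr), zero_mul]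
  · rw [Matrix.transpose_mul, Matrix.mul_assoc, ← Matrix.mul_assoc O₁ᵀ O₁ O₂, h₁.2,
      Matrix.one_mul, h₂.2]

lemma memO_mul_transpose {O : Mat d T} (h : memO O) : O * Oᵀ = 1 :=
  mul_eq_one_comm.mp h.2

lemma memO_transpose {O : Mat d T} (h : memO O) : memO Oᵀ :=
  ⟨fun t s i j hts => h.1 s t j i (Ne.symm hts), by
    rw [Matrix.transpose_transpose]; exact memO_mul_transpose h⟩

lemma frobNorm_mul_memO (X : Mat d T) {O : Mat d T} (hO : memO O) :
    frobNorm (X * O) = frobNorm X := by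
  rw [frobNorm_eq_sqrt_trace, frobNorm_eq_sqrt_trace]
  congr 1
  have h1 : (X * O)ᵀ * (X * O) = Oᵀ * ((Xᵀ * X) * O) := by
    rw [Matrix.transpose_mul, Matrix.mul_assoc, ← Matrix.mul_assoc Xᵀ X O]
  rw [h1, Matrix.trace_mul_comm, Matrix.mul_assoc, memO_mul_transpose hO, Matrix.mul_one]

lemma dABW_set_nonempty (A B : Mat d T) :
    {r : ℝ | ∃ O : Mat d T, memO O ∧ r = frobNorm (A - B * O)}.Nonempty :=
  ⟨frobNorm (A - B * 1), 1, memO_one, rfl⟩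

lemma dABW_bddBelow (A B : Mat d T) :
    BddBelow {r : ℝ | ∃ O : Mat d T, memO O ∧ r = frobNorm (A - B * O)} := by
  refine ⟨0, ?_⟩
  rintro r ⟨O, hO, rfl⟩
  exact frobNorm_nonneg _

lemma dABW_le (A B O : Mat d T) (hO : memO O) : dABW A B ≤ frobNorm (A - B * O) :=
  csInf_le (dABW_bddBelow A B) ⟨O, hO, rfl⟩

lemma dABW_le_frobNorm_sub (A B : Mat d T) : dABW A B ≤ frobNorm (A - B) := by
  have := dABW_le A B 1 memO_one
  rwa [Matrix.mul_one] at this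

lemma dABW_ge_aux (A B : Mat d T) : dABW B A ≤ dABW A B := by
  apply le_csInf (dABW_set_nonempty A B)
  rintro r ⟨O, hO, rfl⟩
  have hOt := memO_transpose hO
  have key : (A * Oᵀ - B) * O = A - B * O := by
    rw [sub_mul, Matrix.mul_assoc, hO.2, Matrix.mul_one]
  calc dABW B A ≤ frobNorm (B - A * Oᵀ) := dABW_le _ _ _ hOt
    _ = frobNorm (A * Oᵀ - B) := frobNorm_sub_rev _ _
    _ = frobNorm ((A * Oᵀ - B) * O) := (frobNorm_mul_memO _ hO).symm
    _ = frobNorm (A - B * O) := by rw [key]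

lemma dABW_symm (A B : Mat d T) : dABW A B = dABW B A :=
  le_antisymm (dABW_ge_aux B A) (dABW_ge_aux A B)

lemma dABW_triangle (A B C : Mat d T) : dABW A C ≤ dABW A B + dABW B C := by
  have key : ∀ O₁ O₂ : Mat d T, memO O₁ → memO O₂ →
      dABW A C ≤ frobNorm (A - B * O₁) + frobNorm (B - C * O₂) := by
    intro O₁ O₂ h₁ h₂
    have h₃ : memO (O₂ * O₁) := memO_mul h₂ h₁
    calc dABW A C ≤ frobNorm (A - C * (O₂ * O₁)) := dABW_le _ _ _ h₃
      _ = frobNorm ((A - B * O₁) + (B - C * O₂) * O₁) := by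
          rw [sub_mul, ← Matrix.mul_assoc]; congr 1; abel
      _ ≤ frobNorm (A - B * O₁) + frobNorm ((B - C * O₂) * O₁) := by
          rw [frobNorm_eq_norm, frobNorm_eq_norm, frobNorm_eq_norm]
          exact norm_add_le _ _
      _ = frobNorm (A - B * O₁) + frobNorm (B - C * O₂) := by
          rw [frobNorm_mul_memO _ h₁]
  have h1 : dABW A C - dABW B C ≤ dABW A B := by
    apply le_csInf (dABW_set_nonempty A B)
    rintro r ⟨O₁, h₁, rfl⟩
    have h2 : dABW A C - frobNorm (A - B * O₁) ≤ dABW B C := by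
      apply le_csInf (dABW_set_nonempty B C)
      rintro s ⟨O₂, h₂, rfl⟩
      linarith [key O₁ O₂ h₁ h₂]
    linarith
  linarith

end Stmt9Aux

/-- for `V ∈ 𝐕(L)`, `d_ABW(L+uV, L+vV) = |u - v| ‖V‖_F` for `u, v ∈ [0,1]`;
in particular `u ↦ L + uV` is a constant speed geodesic. -/
theorem stmt9 (d T : ℕ) (hd : 0 < d) (hT : 0 < T) (L V : Mat d T)
    (hL : memL L) (hV : V ∈ VSet L) :
    ∀ u v : ℝ, u ∈ Set.Icc (0 : ℝ) 1 → v ∈ Set.Icc (0 : ℝ) 1 →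
      dABW (L + u • V) (L + v • V) = |u - v| * frobNorm V := by
  obtain ⟨M, P, hM, hP, hVeq⟩ := hV
  obtain ⟨hPO, hPopt⟩ := hP
  set N := frobNorm V with hN
  have hLV : L + V = M * P := by rw [hVeq]; abel
  have hnormV : N = frobNorm (L - M * P) := by
    rw [hN, hVeq, Stmt9Aux.frobNorm_sub_rev]
  have lower : N ≤ dABW L (L + V) := by
    rw [hnormV, hPopt]
    apply le_csInf (Stmt9Aux.dABW_set_nonempty _ _)
    rintro r ⟨O, hO, rfl⟩
    rw [hLV, Matrix.mul_assoc]
    exact Stmt9Aux.dABW_le L M (P * O) (Stmt9Aux.memO_mul hPO hO)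
  have main : ∀ u v : ℝ, u ∈ Set.Icc (0:ℝ) 1 → v ∈ Set.Icc (0:ℝ) 1 → u ≤ v →
      dABW (L + u • V) (L + v • V) = (v - u) * N := by
    intro u v hu hv huv
    have hupper : dABW (L + u • V) (L + v • V) ≤ (v - u) * N := by
      have hdiff : (L + u • V) - (L + v • V) = (u - v) • V := by
        rw [add_sub_add_left_eq_sub, ← sub_smul]
      have h := Stmt9Aux.dABW_le_frobNorm_sub (L + u • V) (L + v • V)
      rw [hdiff, Stmt9Aux.frobNorm_smul, abs_of_nonpos (by linarith),
        show -(u - v) = v - u by ring] at h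
      exact h
    have h1 : dABW L (L + u • V) ≤ u * N := by
      have hdiff : L - (L + u • V) = (-u) • V := by
        rw [sub_add_eq_sub_sub, sub_self, zero_sub, ← neg_smul]
      have h := Stmt9Aux.dABW_le_frobNorm_sub L (L + u • V)
      rw [hdiff, Stmt9Aux.frobNorm_smul, abs_neg, abs_of_nonneg hu.1] at h
      exact h
    have h2 : dABW (L + v • V) (L + V) ≤ (1 - v) * N := by
      have hdiff : (L + v • V) - (L + V) = (v - 1) • V := by
        rw [add_sub_add_left_eq_sub, sub_smul, one_smul]
      have h := Stmt9Aux.dABW_le_frobNorm_sub (L + v • V) (L + V)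
      rw [hdiff, Stmt9Aux.frobNorm_smul, abs_of_nonpos (by linarith [hv.2]),
        show -(v - 1) = 1 - v by ring] at h
      exact h
    have htri1 := Stmt9Aux.dABW_triangle L (L + u • V) (L + V)
    have htri2 := Stmt9Aux.dABW_triangle (L + u • V) (L + v • V) (L + V)
    have hring : u * N + (1 - v) * N + (v - u) * N = N := by ring
    linarith
  intro u v hu hv
  rcases le_total u v with h | h
  · rw [main u v hu hv h, abs_sub_comm, abs_of_nonneg (sub_nonneg.mpr h)]
  · rw [Stmt9Aux.dABW_symm, main v u hv hu h, abs_of_nonneg (sub_nonneg.mpr h)]
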